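/- Let S = UΛUᵀ with UᵀU = I_m, let ρ > 0, and let C be any real p×p matrix. Then the matrix Ω = ρ⁻¹C − ρ⁻¹CUΛ₂Uᵀ − ρ⁻¹UΛ₂UᵀC + ρ⁻¹U{Λ₃ ∘ (UᵀCU)}Uᵀ satisfies the equation 2⁻¹SΩ + 2⁻¹ΩS + ρΩ = C. -/

import Mathlib

open Matrix

/-- With `S = U Λ Uᵀ`, `Uᵀ U = I_m`, `ρ > 0`, and any `C`, the matrix
`Ω = ρ⁻¹ C − ρ⁻¹ C U Λ₂ Uᵀ − ρ⁻¹ U Λ₂ Uᵀ C + ρ⁻¹ U {Λ₃ ∘ (Uᵀ C U)} Uᵀ`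
satisfies `2⁻¹ S Ω + 2⁻¹ Ω S + ρ Ω = C`, where `∘` is the Hadamard product. -/
theorem stmt_4 (p m : ℕ) (hp : 0 < p) (hm : 0 < m)
    (U : Matrix (Fin p) (Fin m) ℝ) (hU : Uᵀ * U = 1)
    (τ : Fin m → ℝ) (hτ : ∀ i, 0 ≤ τ i)
    (Λ : Matrix (Fin m) (Fin m) ℝ) (hΛ : Λ = Matrix.diagonal τ)
    (S : Matrix (Fin p) (Fin p) ℝ) (hS : S = U * Λ * Uᵀ)
    (ρ : ℝ) (hρ : 0 < ρ)
    (Λ₂ : Matrix (Fin m) (Fin m) ℝ)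
    (hΛ₂ : Λ₂ = Matrix.diagonal (fun i => τ i / (τ i + 2 * ρ)))
    (Λ₃ : Matrix (Fin m) (Fin m) ℝ)
    (hΛ₃ : Λ₃ = fun i j => τ i * τ j * (τ i + τ j + 4 * ρ) /
      ((τ i + 2 * ρ) * (τ j + 2 * ρ) * (τ i + τ j + 2 * ρ)))
    (C : Matrix (Fin p) (Fin p) ℝ)
    (Ω : Matrix (Fin p) (Fin p) ℝ)
    (hΩ : Ω = ρ⁻¹ • C - ρ⁻¹ • (C * U * Λ₂ * Uᵀ) - ρ⁻¹ • (U * Λ₂ * Uᵀ * C)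
      + ρ⁻¹ • (U * (Matrix.hadamard Λ₃ (Uᵀ * C * U)) * Uᵀ)) :
    (2⁻¹ : ℝ) • (S * Ω) + (2⁻¹ : ℝ) • (Ω * S) + ρ • Ω = C := by
  have htpos : ∀ i, (0:ℝ) < τ i + 2 * ρ := fun i => by have := hτ i; linarith
  have keyA : (2⁻¹ * ρ⁻¹ : ℝ) • (Λ - Λ * Λ₂) - Λ₂ = 0 := by
    subst hΛ hΛ₂
    ext i j
    by_cases h : i = j
    · subst h
      simp [Matrix.diagonal_mul_diagonal, Matrix.diagonal_apply_eq]
      field_simp [(htpos i).ne']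
      ring
    · simp [Matrix.diagonal_mul_diagonal, Matrix.diagonal_apply_ne _ h]
  have keyB : (2⁻¹ * ρ⁻¹ : ℝ) • (Λ - Λ₂ * Λ) - Λ₂ = 0 := by
    subst hΛ hΛ₂
    ext i j
    by_cases h : i = j
    · subst h
      simp [Matrix.diagonal_mul_diagonal, Matrix.diagonal_apply_eq]
      field_simp [(htpos i).ne']
      ring
    · simp [Matrix.diagonal_mul_diagonal, Matrix.diagonal_apply_ne _ h]
  have keyE : (2⁻¹ * ρ⁻¹ : ℝ) • (Λ * Matrix.hadamard Λ₃ (Uᵀ * C * U)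
        + Matrix.hadamard Λ₃ (Uᵀ * C * U) * Λ
        - Λ * (Uᵀ * C * U) * Λ₂ - Λ₂ * (Uᵀ * C * U) * Λ)
      + Matrix.hadamard Λ₃ (Uᵀ * C * U) = 0 := by
    ext i j
    have h1 := (htpos i).ne'
    have h2 := (htpos j).ne'
    have h3 : (τ i + τ j + 2*ρ) ≠ 0 := by have := hτ i; have := hτ j; positivity
    simp only [hΛ, hΛ₂, hΛ₃, Matrix.add_apply, Matrix.sub_apply, Matrix.smul_apply,
      Matrix.zero_apply, Matrix.diagonal_mul, Matrix.mul_diagonal, Matrix.hadamard_apply,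
      smul_eq_mul]
    simp only [Matrix.hadamard, Matrix.of_apply]
    field_simp [h1, h2, h3]
    ring
  have hUU : ∀ (X : Matrix (Fin m) (Fin p) ℝ), Uᵀ * (U * X) = X := by
    intro X; rw [← Matrix.mul_assoc, hU, Matrix.one_mul]
  have main : (2⁻¹ : ℝ) • (S * Ω) + (2⁻¹ : ℝ) • (Ω * S) + ρ • Ω
      = C + U * ((2⁻¹ * ρ⁻¹ : ℝ) • (Λ - Λ * Λ₂) - Λ₂) * (Uᵀ * C)
          + (C * U) * ((2⁻¹ * ρ⁻¹ : ℝ) • (Λ - Λ₂ * Λ) - Λ₂) * Uᵀ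
          + U * ((2⁻¹ * ρ⁻¹ : ℝ) • (Λ * Matrix.hadamard Λ₃ (Uᵀ * C * U)
                + Matrix.hadamard Λ₃ (Uᵀ * C * U) * Λ
                - Λ * (Uᵀ * C * U) * Λ₂ - Λ₂ * (Uᵀ * C * U) * Λ)
              + Matrix.hadamard Λ₃ (Uᵀ * C * U)) * Uᵀ := by
    rw [hΩ, hS]
    simp only [Matrix.mul_sub, Matrix.sub_mul, Matrix.mul_add, Matrix.add_mul,
      Matrix.mul_smul, Matrix.smul_mul, smul_sub, smul_add, smul_smul, Matrix.mul_assoc, hUU]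
    simp only [mul_inv_cancel₀ hρ.ne', one_smul]
    module
  rw [main, keyA, keyB, keyE]
  simp
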